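/- If x(u), p_1(u) solve dx/du = p_1 x^3(x-1)/(x+1)^2, dp_1/du = p_1^2 x^2(3-2x)/(x+1)^3 - 2p_0^2(x+1)^4/(x^3(x-1)) and (ξ_1,ξ_2) solve the linear system dξ_1/du = (x^3/(1+x)^3) ξ_2, dξ_2/du = 3 p_1^2 (x(x-1)/(x+1)^2) ξ_1, then (ξ_1,ξ_2) coincide with the (y,p_2)-components of the variational equations of the full Hamiltonian system (in rescaled time u) along the solution (x(u), p_1(u), y=0, p_2=0, p_3=0); i.e., the variational equations decouple with this 2×2 block. -/

import Mathlib

/-- The Zipoy-Voorhees Hamiltonian as a function on the 8-dimensional phase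
space `z = (t, x, y, φ, p₀, p₁, p₂, p₃)`. -/
noncomputable def H8 (z : Fin 8 → ℝ) : ℝ :=
  -((z 1 + 1) ^ 2 / (2 * (z 1 - 1) ^ 2)) * (z 4) ^ 2
  + (((z 1) ^ 2 - (z 2) ^ 2) ^ 3 / (2 * (z 1 - 1) * (z 1 + 1) ^ 5)) * (z 5) ^ 2
  + (((z 1) ^ 2 - (z 2) ^ 2) ^ 3 * (1 - (z 2) ^ 2)
      / (2 * (z 1 - 1) ^ 2 * (z 1 + 1) ^ 6)) * (z 6) ^ 2
  + ((z 1 - 1) / (2 * (z 1 + 1) ^ 3 * (1 - (z 2) ^ 2))) * (z 7) ^ 2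

/-- Partial derivative of a function on phase space in the `i`-th direction. -/
noncomputable def pd (F : (Fin 8 → ℝ) → ℝ) (i : Fin 8) (z : Fin 8 → ℝ) : ℝ :=
  deriv (fun s => F (Function.update z i s)) (z i)

/-- The time-rescaling factor `dτ/du = (x-1)²(x+1)³/x³`. -/
noncomputable def rescale (z : Fin 8 → ℝ) : ℝ :=
  (z 1 - 1) ^ 2 * (z 1 + 1) ^ 3 / (z 1) ^ 3

/-- The Hamiltonian vector field of `H8` in the rescaled time `u`
(`dτ = ((x-1)²(x+1)³/x³) du`): `dq_i/du = ρ ∂H/∂p_i`, `dp_i/du = -ρ ∂H/∂q_i`. -/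
noncomputable def Vfield (z : Fin 8 → ℝ) : Fin 8 → ℝ := fun i =>
  if (i : ℕ) < 4 then rescale z * pd H8 (i + 4) z
  else -(rescale z * pd H8 (i - 4) z)

/-- `∂H/∂p₂` in closed form (valid at every point, since the relevant
function of `p₂` is a polynomial). -/
lemma pdH8_6 (w : Fin 8 → ℝ) : pd H8 6 w =
    (((w 1) ^ 2 - (w 2) ^ 2) ^ 3 * (1 - (w 2) ^ 2)
      / (2 * (w 1 - 1) ^ 2 * (w 1 + 1) ^ 6)) * (2 * w 6) := by
  have hfun : (fun s => H8 (Function.update w 6 s)) = fun s =>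
      (-((w 1 + 1) ^ 2 / (2 * (w 1 - 1) ^ 2)) * (w 4) ^ 2
      + (((w 1) ^ 2 - (w 2) ^ 2) ^ 3 / (2 * (w 1 - 1) * (w 1 + 1) ^ 5)) * (w 5) ^ 2
      + ((w 1 - 1) / (2 * (w 1 + 1) ^ 3 * (1 - (w 2) ^ 2))) * (w 7) ^ 2)
      + (((w 1) ^ 2 - (w 2) ^ 2) ^ 3 * (1 - (w 2) ^ 2)
        / (2 * (w 1 - 1) ^ 2 * (w 1 + 1) ^ 6)) * s ^ 2 := by
    funext s; simp [H8, Function.update]; ring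
  have h : HasDerivAt (fun s => H8 (Function.update w 6 s))
      ((((w 1) ^ 2 - (w 2) ^ 2) ^ 3 * (1 - (w 2) ^ 2)
        / (2 * (w 1 - 1) ^ 2 * (w 1 + 1) ^ 6)) * (2 * w 6)) (w 6) := by
    rw [hfun]
    have := ((hasDerivAt_pow 2 (w 6)).const_mul
      (((w 1) ^ 2 - (w 2) ^ 2) ^ 3 * (1 - (w 2) ^ 2)
        / (2 * (w 1 - 1) ^ 2 * (w 1 + 1) ^ 6))).const_add
      (-((w 1 + 1) ^ 2 / (2 * (w 1 - 1) ^ 2)) * (w 4) ^ 2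
      + (((w 1) ^ 2 - (w 2) ^ 2) ^ 3 / (2 * (w 1 - 1) * (w 1 + 1) ^ 5)) * (w 5) ^ 2
      + ((w 1 - 1) / (2 * (w 1 + 1) ^ 3 * (1 - (w 2) ^ 2))) * (w 7) ^ 2)
    refine this.congr_deriv ?_
    push_cast
    ring
  exact h.deriv

/-- If `y = 0` then `∂H/∂y = 0`. -/
lemma pdH8_2_zero (w : Fin 8 → ℝ) (h2 : w 2 = 0) : pd H8 2 w = 0 := by
  have hfun : (fun s => H8 (Function.update w 2 s)) = fun s =>
      (-((w 1 + 1) ^ 2 / (2 * (w 1 - 1) ^ 2)) * (w 4) ^ 2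
      + ((w 5) ^ 2 / (2 * (w 1 - 1) * (w 1 + 1) ^ 5)) * ((w 1) ^ 2 - s ^ 2) ^ 3
      + ((w 6) ^ 2 / (2 * (w 1 - 1) ^ 2 * (w 1 + 1) ^ 6))
          * (((w 1) ^ 2 - s ^ 2) ^ 3 * (1 - s ^ 2))
      + ((w 1 - 1) * (w 7) ^ 2 / (2 * (w 1 + 1) ^ 3)) / (1 - s ^ 2)) := by
    funext s
    simp [H8, Function.update]
    rw [div_div]
    ring
  have h1 : HasDerivAt (fun s : ℝ => (w 1) ^ 2 - s ^ 2) (-(2 * (0:ℝ) ^ 1)) 0 :=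
    (hasDerivAt_pow 2 (0:ℝ)).const_sub ((w 1) ^ 2)
  have h1' : HasDerivAt (fun s : ℝ => (1:ℝ) - s ^ 2) (-(2 * (0:ℝ) ^ 1)) 0 :=
    (hasDerivAt_pow 2 (0:ℝ)).const_sub 1
  have hA := (h1.pow 3).const_mul ((w 5) ^ 2 / (2 * (w 1 - 1) * (w 1 + 1) ^ 5))
  have hB := ((h1.pow 3).mul h1').const_mul
    ((w 6) ^ 2 / (2 * (w 1 - 1) ^ 2 * (w 1 + 1) ^ 6))
  have hne : (1:ℝ) - (0:ℝ) ^ 2 ≠ 0 := by norm_num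
  have hC := (hasDerivAt_const (0:ℝ) ((w 1 - 1) * (w 7) ^ 2 / (2 * (w 1 + 1) ^ 3))).div h1'
    (by norm_num)
  have h := (((hA.const_add
      (-((w 1 + 1) ^ 2 / (2 * (w 1 - 1) ^ 2)) * (w 4) ^ 2)).add hB).add hC)
  unfold pd
  rw [hfun, h2]
  erw [h.deriv]
  norm_num

/-- `∂H/∂y` along the line `y = s` through a point with `p₂ = p₃ = 0`. -/
lemma pdH8_2_line (z : Fin 8 → ℝ) (h6 : z 6 = 0) (h7 : z 7 = 0) (s : ℝ) :
    pd H8 2 (Function.update z 2 s) =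
      ((z 5) ^ 2 / (2 * (z 1 - 1) * (z 1 + 1) ^ 5))
        * (3 * ((z 1) ^ 2 - s ^ 2) ^ 2 * (-(2 * s))) := by
  have hfun : (fun t => H8 (Function.update (Function.update z 2 s) 2 t)) = fun t =>
      (-((z 1 + 1) ^ 2 / (2 * (z 1 - 1) ^ 2)) * (z 4) ^ 2)
      + ((z 5) ^ 2 / (2 * (z 1 - 1) * (z 1 + 1) ^ 5)) * ((z 1) ^ 2 - t ^ 2) ^ 3 := by
    funext t
    rw [Function.update_idem]
    simp [H8, Function.update, h6, h7]
    ring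
  have h1 : HasDerivAt (fun t : ℝ => (z 1) ^ 2 - t ^ 2) (-(2 * s ^ 1)) s :=
    (hasDerivAt_pow 2 s).const_sub ((z 1) ^ 2)
  have h := ((h1.pow 3).const_mul ((z 5) ^ 2 / (2 * (z 1 - 1) * (z 1 + 1) ^ 5))).const_add
    (-((z 1 + 1) ^ 2 / (2 * (z 1 - 1) ^ 2)) * (z 4) ^ 2)
  unfold pd
  rw [hfun]
  have hupd : Function.update z 2 s 2 = s := Function.update_self 2 s z
  erw [hupd, h.deriv]
  push_cast
  ring

lemma rescale_update (z : Fin 8 → ℝ) (j : Fin 8) (hj : j ≠ 1) (s : ℝ) :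
    rescale (Function.update z j s) = rescale z := by
  unfold rescale
  rw [Function.update_of_ne (Ne.symm hj)]



/-- Along a solution lying in `{y = 0, p₂ = 0, p₃ = 0}` (indices `2, 6, 7`),
the variational equations of the rescaled Zipoy-Voorhees system decouple:
the rows of the Jacobian `A(u)` of the vector field corresponding to the
variations `(ξ₁, ξ₂)` of `(y, p₂)` vanish except for the entries
`A_{y,p₂} = x³/(1+x)³` and `A_{p₂,y} = 3 p₁² x(x-1)/(x+1)²`.  Hence any
solution of `dξ₁/du = (x³/(1+x)³) ξ₂`, `dξ₂/du = 3 p₁² (x(x-1)/(x+1)²) ξ₁`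
coincides with the `(y,p₂)`-components of the variational equations. -/
theorem stmt6 (z : Fin 8 → ℝ) (hx : 1 < z 1)
    (hy : z 2 = 0) (hp2 : z 6 = 0) (hp3 : z 7 = 0) :
    (∀ j : Fin 8, pd (fun w => Vfield w 2) j z =
      if j = 6 then (z 1) ^ 3 / (1 + z 1) ^ 3 else 0) ∧
    (∀ j : Fin 8, pd (fun w => Vfield w 6) j z =
      if j = 2 then 3 * (z 5) ^ 2 * ((z 1) * (z 1 - 1) / (z 1 + 1) ^ 2) else 0) := by
  have hx0 : z 1 ≠ 0 := by linarith
  have hxm : z 1 - 1 ≠ 0 := by linarith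
  have hxp : z 1 + 1 ≠ 0 := by linarith
  have hxp' : 1 + z 1 ≠ 0 := by linarith
  have hvf2 : ∀ w : Fin 8 → ℝ, Vfield w 2 = rescale w * pd H8 6 w := fun _ => rfl
  have hvf6 : ∀ w : Fin 8 → ℝ, Vfield w 6 = -(rescale w * pd H8 2 w) := fun _ => rfl
  constructor
  · intro j
    by_cases hj : j = 6
    · subst hj
      rw [if_pos rfl]
      have hfun : (fun s => Vfield (Function.update z 6 s) 2)
          = fun s => (rescale z * ((((z 1) ^ 2 - (z 2) ^ 2) ^ 3 * (1 - (z 2) ^ 2)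
              / (2 * (z 1 - 1) ^ 2 * (z 1 + 1) ^ 6)) * 2)) * s := by
        funext s
        rw [hvf2, pdH8_6, rescale_update z 6 (by decide) s]
        rw [Function.update_of_ne (by decide), Function.update_of_ne (by decide),
          Function.update_self]
        ring
      unfold pd
      rw [hfun, ((hasDerivAt_id' (z 6)).const_mul
        (rescale z * ((((z 1) ^ 2 - (z 2) ^ 2) ^ 3 * (1 - (z 2) ^ 2)
          / (2 * (z 1 - 1) ^ 2 * (z 1 + 1) ^ 6)) * 2))).deriv]
      rw [hy]
      unfold rescale
      field_simp
      ring
    · rw [if_neg hj]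
      have hfun : (fun s => Vfield (Function.update z j s) 2) = fun _ => (0:ℝ) := by
        funext s
        rw [hvf2, pdH8_6, Function.update_of_ne (Ne.symm hj), hp2]
        ring
      unfold pd
      rw [hfun, deriv_const]
  · intro j
    by_cases hj : j = 2
    · subst hj
      rw [if_pos rfl]
      have hfun : (fun s => Vfield (Function.update z 2 s) 6)
          = fun s => (rescale z * ((z 5) ^ 2 / (2 * (z 1 - 1) * (z 1 + 1) ^ 5)) * 6)
              * (s * ((z 1) ^ 2 - s ^ 2) ^ 2) := by
        funext s
        rw [hvf6, pdH8_2_line z hp2 hp3 s, rescale_update z 2 (by decide) s]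
        ring
      have h1 : HasDerivAt (fun s : ℝ => (z 1) ^ 2 - s ^ 2) (-(2 * (0:ℝ) ^ 1)) 0 :=
        (hasDerivAt_pow 2 (0:ℝ)).const_sub ((z 1) ^ 2)
      have h2 := (hasDerivAt_id' (0:ℝ)).mul (h1.pow 2)
      have h3 := h2.const_mul
        (rescale z * ((z 5) ^ 2 / (2 * (z 1 - 1) * (z 1 + 1) ^ 5)) * 6)
      unfold pd
      erw [hfun, hy, h3.deriv]
      unfold rescale
      simp only [Pi.pow_apply]
      push_cast
      field_simp
      ring
    · rw [if_neg hj]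
      have hfun : (fun s => Vfield (Function.update z j s) 6) = fun _ => (0:ℝ) := by
        funext s
        rw [hvf6, pdH8_2_zero _ (by rw [Function.update_of_ne (Ne.symm hj)]; exact hy)]
        ring
      unfold pd
      rw [hfun, deriv_const]
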